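/- The set C = {[[a,b],[c,−a]] : a,b,c ∈ ℝ, b ≥ 0, c ≤ 0, a² ≤ −bc} is a closed convex cone in sl₂(ℝ) which is pointed (C ∩ (−C) = {0}), generating (C − C = sl₂(ℝ)), and invariant under the adjoint action: g·C·g⁻¹ = C for every g ∈ SL₂(ℝ). Moreover C = {x ∈ sl₂(ℝ) : det x ≥ 0 and b − c ≥ 0}, where b and c denote the upper-right and lower-left entries of x. -/

import Mathlib

open Matrix

/-- The cone `C = {[[a,b],[c,−a]] : b ≥ 0, c ≤ 0, a² ≤ −bc}` in `sl₂(ℝ)`. -/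
def CSL2 : Set (Matrix (Fin 2) (Fin 2) ℝ) :=
  {m | m 1 1 = -(m 0 0) ∧ 0 ≤ m 0 1 ∧ m 1 0 ≤ 0 ∧ (m 0 0) ^ 2 ≤ -(m 0 1 * m 1 0)}

theorem amgm (A B X Y u a : ℝ) (hA : 0 ≤ A) (hB : 0 ≤ B) (hX : 0 ≤ X) (hY : 0 ≤ Y)
    (h1 : a^2 ≤ X*Y) (h2 : u^2 ≤ A*B) : 2*u*a ≤ A*X + B*Y := by
  have hS : 0 ≤ A*X + B*Y := by positivity
  have key : (2*u*a)^2 ≤ (A*X + B*Y)^2 := by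
    nlinarith [sq_nonneg (A*X - B*Y), mul_le_mul h2 h1 (sq_nonneg a) (mul_nonneg hA hB)]
  nlinarith [key, hS]

theorem char_eq : CSL2 = {m : Matrix (Fin 2) (Fin 2) ℝ |
    Matrix.trace m = 0 ∧ 0 ≤ m.det ∧ 0 ≤ m 0 1 - m 1 0} := by
  ext m
  simp only [CSL2, Set.mem_setOf_eq, Matrix.trace_fin_two, Matrix.det_fin_two]
  constructor
  · rintro ⟨h1, h2, h3, h4⟩
    refine ⟨by linarith, ?_, by linarith⟩
    rw [h1]; nlinarith
  · rintro ⟨h1, h2, h3⟩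
    have e : m 1 1 = -(m 0 0) := by linarith
    rw [e] at h2
    refine ⟨e, ?_, ?_, by nlinarith⟩
    · nlinarith [sq_nonneg (m 0 0), sq_nonneg (m 0 1)]
    · nlinarith [sq_nonneg (m 0 0), sq_nonneg (m 1 0)]

theorem conj_mem (g : Matrix.SpecialLinearGroup (Fin 2) ℝ) (m : Matrix (Fin 2) (Fin 2) ℝ)
    (hm : m ∈ CSL2) :
    (g : Matrix (Fin 2) (Fin 2) ℝ) * m * ((g⁻¹ : Matrix.SpecialLinearGroup (Fin 2) ℝ) :
      Matrix (Fin 2) (Fin 2) ℝ) ∈ CSL2 := by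
  obtain ⟨h1, h2, h3, h4⟩ := hm
  rw [char_eq]
  have hdetg : (g : Matrix (Fin 2) (Fin 2) ℝ).det = 1 := g.prop
  have hinv : ((g⁻¹ : Matrix.SpecialLinearGroup (Fin 2) ℝ) : Matrix (Fin 2) (Fin 2) ℝ) *
      (g : Matrix (Fin 2) (Fin 2) ℝ) = 1 := by
    rw [← Matrix.SpecialLinearGroup.coe_mul, inv_mul_cancel,
      Matrix.SpecialLinearGroup.coe_one]
  refine ⟨?_, ?_, ?_⟩
  · rw [Matrix.trace_mul_comm, ← Matrix.mul_assoc, hinv, Matrix.one_mul,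
      Matrix.trace_fin_two, h1]; ring
  · rw [Matrix.det_mul, Matrix.det_mul, hdetg, Matrix.SpecialLinearGroup.det_coe,
      Matrix.det_fin_two, h1]
    nlinarith
  · have hexpl := Matrix.SpecialLinearGroup.SL2_inv_expl g
    rw [Matrix.SpecialLinearGroup.coe_inv, Matrix.adjugate_fin_two]
    have hgdet : g 0 0 * g 1 1 - g 0 1 * g 1 0 = 1 := by
      have := hdetg; rwa [Matrix.det_fin_two] at this
    simp only [Matrix.SpecialLinearGroup.coe_mk, Matrix.mul_apply, Fin.sum_univ_two,
      Matrix.cons_val', Matrix.cons_val_zero, Matrix.cons_val_one, Matrix.head_cons,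
      Matrix.head_fin_const, Matrix.empty_val', Matrix.cons_val_fin_one, Matrix.of_apply]
    set p := g 0 0; set q := g 0 1; set r := g 1 0; set s := g 1 1
    have := amgm (p^2+r^2) (q^2+s^2) (m 0 1) (-(m 1 0)) (p*q+r*s) (m 0 0)
      (by positivity) (by positivity) h2 (by linarith) (by nlinarith)
      (by nlinarith [sq_nonneg (p*s - q*r)])
    rw [h1]; nlinarith [this]

/-- `C` is a closed convex cone in `sl₂(ℝ)` which is pointed, generating
(`C − C = sl₂(ℝ)`), and invariant under the adjoint action of `SL₂(ℝ)`; moreover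
`C = {x ∈ sl₂(ℝ) : det x ≥ 0, b − c ≥ 0}`. -/
theorem statement6 :
    IsClosed CSL2 ∧
    Convex ℝ CSL2 ∧
    (∀ r : ℝ, 0 ≤ r → ∀ x ∈ CSL2, r • x ∈ CSL2) ∧
    CSL2 ∩ (-CSL2) = {0} ∧
    {z : Matrix (Fin 2) (Fin 2) ℝ | ∃ x ∈ CSL2, ∃ y ∈ CSL2, z = x - y} =
      {m : Matrix (Fin 2) (Fin 2) ℝ | Matrix.trace m = 0} ∧
    (∀ g : Matrix.SpecialLinearGroup (Fin 2) ℝ,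
      (fun m => (g : Matrix (Fin 2) (Fin 2) ℝ) * m *
        ((g⁻¹ : Matrix.SpecialLinearGroup (Fin 2) ℝ) : Matrix (Fin 2) (Fin 2) ℝ)) '' CSL2
        = CSL2) ∧
    CSL2 = {m : Matrix (Fin 2) (Fin 2) ℝ |
      Matrix.trace m = 0 ∧ 0 ≤ m.det ∧ 0 ≤ m 0 1 - m 1 0} := by
  have cont : ∀ i j : Fin 2, Continuous fun m : Matrix (Fin 2) (Fin 2) ℝ => m i j :=
    fun i j => (continuous_apply j).comp (continuous_apply i)
  refine ⟨?_, ?_, ?_, ?_, ?_, ?_, char_eq⟩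
  · -- closed
    have : CSL2 = {m : Matrix (Fin 2) (Fin 2) ℝ | m 1 1 = -(m 0 0)} ∩
        ({m | 0 ≤ m 0 1} ∩ ({m | m 1 0 ≤ 0} ∩
          {m | (m 0 0) ^ 2 ≤ -(m 0 1 * m 1 0)})) := by
      ext m; simp [CSL2, Set.mem_setOf_eq, Set.mem_inter_iff, and_assoc]
    rw [this]
    refine (isClosed_eq (cont 1 1) (cont 0 0).neg).inter
      ((isClosed_le continuous_const (cont 0 1)).inter
        ((isClosed_le (cont 1 0) continuous_const).inter
          (isClosed_le (((cont 0 0).pow 2)) ((((cont 0 1).mul (cont 1 0))).neg))))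
  · -- convex
    rintro x ⟨hx1, hx2, hx3, hx4⟩ y ⟨hy1, hy2, hy3, hy4⟩ a b ha hb hab
    simp only [CSL2, Set.mem_setOf_eq, Matrix.add_apply, Matrix.smul_apply, smul_eq_mul]
    refine ⟨by rw [hx1, hy1]; ring, by positivity, ?_, ?_⟩
    · have := mul_nonneg ha (neg_nonneg.mpr hx3)
      have := mul_nonneg hb (neg_nonneg.mpr hy3)
      linarith
    · have h := amgm (x 0 1) (-(x 1 0)) (-(y 1 0)) (y 0 1) (x 0 0) (y 0 0)
        hx2 (by linarith) (by linarith) hy2 (by nlinarith) (by nlinarith)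
      have e1 := mul_le_mul_of_nonneg_left hx4 (mul_nonneg ha ha)
      have e2 := mul_le_mul_of_nonneg_left hy4 (mul_nonneg hb hb)
      have e3 := mul_le_mul_of_nonneg_left h (mul_nonneg ha hb)
      nlinarith [e1, e2, e3]
  · -- cone
    rintro r hr x ⟨h1, h2, h3, h4⟩
    simp only [CSL2, Set.mem_setOf_eq, Matrix.smul_apply, smul_eq_mul]
    exact ⟨by rw [h1]; ring, mul_nonneg hr h2, mul_nonpos_of_nonneg_of_nonpos hr h3,
      by nlinarith [mul_le_mul_of_nonneg_left h4 (mul_nonneg hr hr)]⟩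
  · -- pointed
    ext m
    simp only [Set.mem_inter_iff, Set.mem_neg, Set.mem_singleton_iff, CSL2,
      Set.mem_setOf_eq, Matrix.neg_apply]
    constructor
    · rintro ⟨⟨h1, h2, h3, h4⟩, ⟨h1', h2', h3', h4'⟩⟩
      have hb : m 0 1 = 0 := by linarith
      have hc : m 1 0 = 0 := by linarith
      have ha : m 0 0 = 0 := by nlinarith
      ext i j
      fin_cases i <;> fin_cases j <;>
        simp_all [Matrix.zero_apply]
    · rintro rfl
      norm_num
  · -- generating
    ext z
    simp only [Set.mem_setOf_eq]
    constructor
    · rintro ⟨x, ⟨hx1, _, _, _⟩, y, ⟨hy1, _, _, _⟩, rfl⟩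
      rw [Matrix.trace_fin_two]
      simp only [Matrix.sub_apply]
      rw [hx1, hy1]; ring
    · intro hz
      rw [Matrix.trace_fin_two] at hz
      set a := z 0 0
      refine ⟨!![a, |a| + max (z 0 1) 0; -|a| + min (z 1 0) 0, -a], ?_,
        !![0, |a| + max (z 0 1) 0 - z 0 1; -|a| + min (z 1 0) 0 - z 1 0, 0], ?_, ?_⟩
      · refine ⟨by simp, ?_, ?_, ?_⟩ <;>
          simp only [Matrix.cons_val', Matrix.cons_val_zero, Matrix.cons_val_one,
            Matrix.head_cons, Matrix.empty_val', Matrix.cons_val_fin_one, Matrix.of_apply,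
            Matrix.head_fin_const]
        · positivity
        · have := abs_nonneg a
          have := min_le_right (z 1 0) 0
          linarith [min_le_right (z 1 0) (0:ℝ)]
        · have h1 : |a| ≤ |a| + max (z 0 1) 0 := by
            have := le_max_right (z 0 1) (0:ℝ); linarith
          have h2 : |a| ≤ -(-|a| + min (z 1 0) 0) := by
            have := min_le_right (z 1 0) (0:ℝ); linarith
          nlinarith [sq_abs a, abs_nonneg a, mul_le_mul h1 h2 (abs_nonneg a)
            (le_trans (abs_nonneg a) h1)]
      · refine ⟨by simp, ?_, ?_, ?_⟩ <;>
          simp only [Matrix.cons_val', Matrix.cons_val_zero, Matrix.cons_val_one,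
            Matrix.head_cons, Matrix.empty_val', Matrix.cons_val_fin_one, Matrix.of_apply,
            Matrix.head_fin_const]
        · have := le_max_left (z 0 1) (0:ℝ)
          have := abs_nonneg a
          linarith
        · have := min_le_left (z 1 0) (0:ℝ)
          have := abs_nonneg a
          linarith
        · have hb : (0:ℝ) ≤ |a| + max (z 0 1) 0 - z 0 1 := by
            have := le_max_left (z 0 1) (0:ℝ); have := abs_nonneg a; linarith
          have hc : -|a| + min (z 1 0) 0 - z 1 0 ≤ 0 := by
            have := min_le_left (z 1 0) (0:ℝ); have := abs_nonneg a; linarith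
          nlinarith [mul_nonneg hb (neg_nonneg.mpr hc)]
      · ext i j
        fin_cases i <;> fin_cases j <;>
          simp [Matrix.sub_apply] <;> linarith
  · -- adjoint invariance
    intro g
    ext m
    simp only [Set.mem_image]
    constructor
    · rintro ⟨x, hx, rfl⟩
      exact conj_mem g x hx
    · intro hm
      refine ⟨((g⁻¹ : Matrix.SpecialLinearGroup (Fin 2) ℝ) : Matrix (Fin 2) (Fin 2) ℝ) * m *
        (g : Matrix (Fin 2) (Fin 2) ℝ), ?_, ?_⟩
      · have := conj_mem g⁻¹ m hm
        rwa [inv_inv] at this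
      · have hinv1 : (g : Matrix (Fin 2) (Fin 2) ℝ) *
            ((g⁻¹ : Matrix.SpecialLinearGroup (Fin 2) ℝ) : Matrix (Fin 2) (Fin 2) ℝ) = 1 := by
          rw [← Matrix.SpecialLinearGroup.coe_mul, mul_inv_cancel,
            Matrix.SpecialLinearGroup.coe_one]
        calc (g : Matrix (Fin 2) (Fin 2) ℝ) *
              (((g⁻¹ : Matrix.SpecialLinearGroup (Fin 2) ℝ) : Matrix (Fin 2) (Fin 2) ℝ) * m *
                (g : Matrix (Fin 2) (Fin 2) ℝ)) *
              ((g⁻¹ : Matrix.SpecialLinearGroup (Fin 2) ℝ) : Matrix (Fin 2) (Fin 2) ℝ)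
            = ((g : Matrix (Fin 2) (Fin 2) ℝ) *
                ((g⁻¹ : Matrix.SpecialLinearGroup (Fin 2) ℝ) : Matrix (Fin 2) (Fin 2) ℝ)) * m *
              ((g : Matrix (Fin 2) (Fin 2) ℝ) *
                ((g⁻¹ : Matrix.SpecialLinearGroup (Fin 2) ℝ) : Matrix (Fin 2) (Fin 2) ℝ)) := by
              noncomm_ring
          _ = m := by rw [hinv1]; simp
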